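/- Let g: ℝ → ℝ be continuous with g(p) = 0 for some p, and suppose g is differentiable at p with g'(p) ≠ 0 (a hyperbolic zero). Then there exist k > 0 and a neighborhood of p such that any continuous function ĝ with |ĝ − g| < k in C¹-norm on an interval around p has exactly one zero p̂ near p, and sign(ĝ'(p̂)) = sign(g'(p)). Applied to g = det[X,Y]|_D, this shows that a hyperbolic singular point of the Filippov field F_Z persists with the same type (saddle or node) under small C¹ perturbations of Z = (X,Y). -/

import Mathlib

lemma aux_pos (g : ℝ → ℝ) (hg : ContDiff ℝ 1 g)
    (p : ℝ) (hp : g p = 0) (ha : 0 < deriv g p) :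
    ∃ k > (0 : ℝ), ∃ δ > (0 : ℝ), ∀ ghat : ℝ → ℝ,
      ContDiffOn ℝ 1 ghat (Set.Icc (p - δ) (p + δ)) →
      (∀ x ∈ Set.Icc (p - δ) (p + δ), |ghat x - g x| < k ∧ |deriv ghat x - deriv g x| < k) →
      ∃ phat ∈ Set.Icc (p - δ) (p + δ), ghat phat = 0 ∧
        Real.sign (deriv ghat phat) = Real.sign (deriv g p) ∧
        ∀ x ∈ Set.Icc (p - δ) (p + δ), ghat x = 0 → x = phat := by
  set a := deriv g p with hadef
  have hcont : ContinuousAt (deriv g) p :=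
    ((hg.continuous_deriv le_rfl).continuousAt)
  rw [Metric.continuousAt_iff] at hcont
  obtain ⟨δ₀, hδ₀, hδ₀'⟩ := hcont (a/4) (by linarith)
  set δ := δ₀/2 with hδdef
  have hδ : 0 < δ := by positivity
  have hclose : ∀ x ∈ Set.Icc (p - δ) (p + δ), |deriv g x - a| < a/4 := by
    intro x hx
    have : dist x p < δ₀ := by
      rw [Real.dist_eq, abs_lt]
      obtain ⟨h1, h2⟩ := hx
      constructor <;> [linarith; linarith]
    have := hδ₀' this
    rwa [Real.dist_eq] at this
  refine ⟨min (a/4) (a*δ/4), by positivity, δ, hδ, ?_⟩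
  intro ghat hghat hb
  have hmem : ∀ x ∈ Set.Icc (p - δ) (p + δ), a/2 < deriv ghat x := by
    intro x hx
    have h1 := (hb x hx).2
    have h2 := hclose x hx
    have h3 : min (a/4) (a*δ/4) ≤ a/4 := min_le_left _ _
    rw [abs_lt] at h1 h2
    linarith
  -- g values at endpoints via MVT
  have hdg : Differentiable ℝ g := hg.differentiable one_ne_zero
  have hgr : 3*a*δ/4 ≤ g (p + δ) := by
    obtain ⟨c, hc, hceq⟩ := exists_deriv_eq_slope g (by linarith : p < p + δ)
      (hdg.continuous.continuousOn) (hdg.differentiableOn)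
    have hcm : c ∈ Set.Icc (p - δ) (p + δ) := by
      obtain ⟨h1, h2⟩ := hc; constructor <;> linarith
    have hcl := hclose c hcm
    rw [abs_lt] at hcl
    have hmul : deriv g c * (p + δ - p) = g (p + δ) - g p := by
      rw [hceq]; exact div_mul_cancel₀ _ (show p + δ - p ≠ 0 by linarith)
    rw [hp] at hmul
    nlinarith [hcl.1, hcl.2]
  have hgl : g (p - δ) ≤ -(3*a*δ/4) := by
    obtain ⟨c, hc, hceq⟩ := exists_deriv_eq_slope g (by linarith : p - δ < p)
      (hdg.continuous.continuousOn) (hdg.differentiableOn)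
    have hcm : c ∈ Set.Icc (p - δ) (p + δ) := by
      obtain ⟨h1, h2⟩ := hc; constructor <;> linarith
    have hcl := hclose c hcm
    rw [abs_lt] at hcl
    have hmul : deriv g c * (p - (p - δ)) = g p - g (p - δ) := by
      rw [hceq]; exact div_mul_cancel₀ _ (show p - (p - δ) ≠ 0 by linarith)
    rw [hp] at hmul
    nlinarith [hcl.1, hcl.2]
  have hkδ : min (a/4) (a*δ/4) ≤ a*δ/4 := min_le_right _ _
  have hle : p - δ ≤ p + δ := by linarith
  have hmeml : p - δ ∈ Set.Icc (p - δ) (p + δ) := ⟨le_refl _, hle⟩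
  have hmemr : p + δ ∈ Set.Icc (p - δ) (p + δ) := ⟨hle, le_refl _⟩
  have hgr' : 0 < ghat (p + δ) := by
    have := (hb _ hmemr).1
    rw [abs_lt] at this
    linarith
  have hgl' : ghat (p - δ) < 0 := by
    have := (hb _ hmeml).1
    rw [abs_lt] at this
    linarith
  have hcg : ContinuousOn ghat (Set.Icc (p - δ) (p + δ)) := hghat.continuousOn
  have hIVT := intermediate_value_Icc hle hcg
  have h0 : (0:ℝ) ∈ Set.Icc (ghat (p - δ)) (ghat (p + δ)) := ⟨le_of_lt hgl', le_of_lt hgr'⟩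
  obtain ⟨phat, hphat, hphat0⟩ := hIVT h0
  have hmono : StrictMonoOn ghat (Set.Icc (p - δ) (p + δ)) := by
    apply strictMonoOn_of_deriv_pos (convex_Icc _ _) hcg
    intro x hx
    rw [interior_Icc] at hx
    have hx' : x ∈ Set.Icc (p - δ) (p + δ) := Set.mem_Icc_of_Ioo hx
    exact lt_trans (by linarith) (hmem x hx')
  refine ⟨phat, hphat, hphat0, ?_, ?_⟩
  · have h1 : 0 < deriv ghat phat := lt_trans (by linarith) (hmem phat hphat)
    rw [Real.sign_of_pos h1, Real.sign_of_pos ha]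
  · intro x hx hx0
    exact hmono.injOn hx hphat (by rw [hx0, hphat0])

/-- A hyperbolic zero of a C¹ function g (g(p) = 0, g'(p) ≠ 0)
persists, with its sign type, under C¹-small perturbations: there are k > 0 and a
neighborhood [p-δ, p+δ] such that any C¹ function ĝ with |ĝ-g| < k and
|ĝ'-g'| < k on it has exactly one zero p̂ there, with sign(ĝ'(p̂)) = sign(g'(p)).
(Applied to g = det[X,Y]|_D this gives persistence of hyperbolic singular points
of the Filippov field with the same type, saddle or node.) -/
theorem hyperbolic_zero_persistence (g : ℝ → ℝ) (hg : ContDiff ℝ 1 g)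
    (p : ℝ) (hp : g p = 0) (hg' : deriv g p ≠ 0) :
    ∃ k > (0 : ℝ), ∃ δ > (0 : ℝ), ∀ ghat : ℝ → ℝ,
      ContDiffOn ℝ 1 ghat (Set.Icc (p - δ) (p + δ)) →
      (∀ x ∈ Set.Icc (p - δ) (p + δ), |ghat x - g x| < k ∧ |deriv ghat x - deriv g x| < k) →
      ∃ phat ∈ Set.Icc (p - δ) (p + δ), ghat phat = 0 ∧
        Real.sign (deriv ghat phat) = Real.sign (deriv g p) ∧
        ∀ x ∈ Set.Icc (p - δ) (p + δ), ghat x = 0 → x = phat := by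
  rcases lt_or_gt_of_ne hg' with hneg | hpos
  · -- apply aux to -g
    have hg2 : ContDiff ℝ 1 (-g) := hg.neg
    have hderneg : ∀ x, deriv (-g) x = -deriv g x := by
      intro x; exact deriv.neg
    have ha : 0 < deriv (-g) p := by rw [hderneg]; linarith
    obtain ⟨k, hk, δ, hδ, H⟩ := aux_pos (-g) hg2 p (by simp [hp]) ha
    refine ⟨k, hk, δ, hδ, ?_⟩
    intro ghat hghat hb
    have hb' : ∀ x ∈ Set.Icc (p - δ) (p + δ),
        |(-ghat) x - (-g) x| < k ∧ |deriv (-ghat) x - deriv (-g) x| < k := by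
      intro x hx
      obtain ⟨h1, h2⟩ := hb x hx
      constructor
      · show |-ghat x - -g x| < k
        rw [show -ghat x - -g x = -(ghat x - g x) by ring, abs_neg]
        exact h1
      · rw [hderneg, show deriv (-ghat) x = -deriv ghat x from deriv.neg]
        calc |-deriv ghat x - -deriv g x| = |deriv ghat x - deriv g x| := by
              rw [← abs_neg]; ring_nf
          _ < k := h2
    obtain ⟨phat, hphat, h0, hsign, huniq⟩ := H (-ghat) hghat.neg hb'
    refine ⟨phat, hphat, by simpa using h0, ?_, ?_⟩
    · rw [show deriv (-ghat) phat = -deriv ghat phat from deriv.neg, hderneg,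
        Real.sign_neg, Real.sign_neg] at hsign
      exact neg_injective hsign
    · intro x hx hx0
      exact huniq x hx (by simp [hx0])
  · obtain ⟨k, hk, δ, hδ, H⟩ := aux_pos g hg p hp hpos
    exact ⟨k, hk, δ, hδ, H⟩
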